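/- For every VA automaton A there exists a deterministic VA automaton A^det such that ⟦A⟧_d = ⟦A^det⟧_d for every document d, obtained by the subset construction on the alphabet Σ ∪ {⊢x, ⊣x : x ∈ V}. -/

import Mathlib

/-- A mapping: a partial function from variables to spans (pairs of naturals). -/
abbrev Mapping (V : Type) : Type := V → Option (ℕ × ℕ)

/-- Transition labels of a variable-set automaton: a letter, ε, or opening/closing a
variable. -/
inductive VLabel (σ V : Type) : Type
  | ltr (a : σ) : VLabel σ V
  | eps : VLabel σ V
  | vopen (x : V) : VLabel σ V
  | vclose (x : V) : VLabel σ V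
deriving DecidableEq

/-- A variable-set automaton `(Q, q0, qf, δ)`. -/
structure VA (σ V Q : Type) where
  init : Q
  final : Q
  delta : Set (Q × VLabel σ V × Q)

/-- A transition. -/
abbrev Tr (σ V Q : Type) : Type := Q × VLabel σ V × Q

/-- A list of transitions forms a chain starting at state `q`. -/
def ChainFrom {σ V Q : Type} (q : Q) (trs : List (Tr σ V Q)) : Prop :=
  (∀ t ∈ trs.head?, t.1 = q) ∧
  ∀ (i : ℕ) (h : i + 1 < trs.length),
    (trs[i]'(Nat.lt_of_succ_lt h)).2.2 = (trs[i + 1]'h).1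

/-- The end state of a chain of transitions starting at `q`. -/
def endState {σ V Q : Type} (q : Q) (trs : List (Tr σ V Q)) : Q :=
  match trs.getLast? with
  | none => q
  | some t => t.2.2

/-- The word spelled by the letter transitions of a run. -/
def word {σ V Q : Type} (trs : List (Tr σ V Q)) : List σ :=
  trs.filterMap (fun t => match t.2.1 with | VLabel.ltr a => some a | _ => none)

/-- The number of `⊢x` transitions in a list of transitions. -/
def openCount {σ V Q : Type} [DecidableEq σ] [DecidableEq V] (x : V)
    (trs : List (Tr σ V Q)) : ℕ :=
  trs.countP (fun t => t.2.1 = VLabel.vopen x)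

/-- The number of `⊣x` transitions in a list of transitions. -/
def closeCount {σ V Q : Type} [DecidableEq σ] [DecidableEq V] (x : V)
    (trs : List (Tr σ V Q)) : ℕ :=
  trs.countP (fun t => t.2.1 = VLabel.vclose x)

/-- Variables are used correctly in a run: each variable is opened at most once, closed at
most once, and closed only after being opened. -/
def ValidVars {σ V Q : Type} [DecidableEq σ] [DecidableEq V]
    (trs : List (Tr σ V Q)) : Prop :=
  ∀ x : V, openCount x trs ≤ 1 ∧ closeCount x trs ≤ 1 ∧
    ∀ p : List (Tr σ V Q), p <+: trs → closeCount x p ≤ openCount x p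

/-- `trs` is an accepting run of `A` over the document `d`. -/
def AccRun {σ V Q : Type} [DecidableEq σ] [DecidableEq V] (A : VA σ V Q) (d : List σ)
    (trs : List (Tr σ V Q)) : Prop :=
  (∀ t ∈ trs, t ∈ A.delta) ∧ ChainFrom A.init trs ∧ endState A.init trs = A.final ∧
  word trs = d ∧ ValidVars trs

/-- The document position just before the `i`-th transition of a run:
one plus the number of preceding letter transitions. -/
def posAt {σ V Q : Type} (trs : List (Tr σ V Q)) (i : ℕ) : ℕ :=
  1 + (word (trs.take i)).length

/-- The mapping induced by a run: `x` is sent to the span between its opening and its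
closing transition, and is undefined if `x` is not both opened and closed. -/
def runMapping {σ V Q : Type} [DecidableEq σ] [DecidableEq V]
    (trs : List (Tr σ V Q)) : Mapping V :=
  fun x =>
    match trs.findIdx? (fun t => t.2.1 = VLabel.vopen x),
          trs.findIdx? (fun t => t.2.1 = VLabel.vclose x) with
    | some i, some j => some (posAt trs i, posAt trs j)
    | _, _ => none

/-- The semantics `⟦A⟧_d` of a VA `A` over a document `d`: the set of mappings of
accepting runs of `A` over `d`. -/
def semVA {σ V Q : Type} [DecidableEq σ] [DecidableEq V] (A : VA σ V Q) (d : List σ) :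
    Set (Mapping V) :=
  {μ | ∃ trs, AccRun A d trs ∧ μ = runMapping trs}

/-- A variable-set automaton with a set of final states (as used in the subset
construction). -/
structure VAF (σ V Q : Type) where
  init : Q
  finals : Set Q
  delta : Set (Q × VLabel σ V × Q)

/-- `trs` is an accepting run of the set-final VA `B` over the document `d`. -/
def AccRunF {σ V Q : Type} [DecidableEq σ] [DecidableEq V] (B : VAF σ V Q) (d : List σ)
    (trs : List (Tr σ V Q)) : Prop :=
  (∀ t ∈ trs, t ∈ B.delta) ∧ ChainFrom B.init trs ∧ endState B.init trs ∈ B.finals ∧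
  word trs = d ∧ ValidVars trs

/-- The semantics of a set-final VA. -/
def semVAF {σ V Q : Type} [DecidableEq σ] [DecidableEq V] (B : VAF σ V Q) (d : List σ) :
    Set (Mapping V) :=
  {μ | ∃ trs, AccRunF B d trs ∧ μ = runMapping trs}

/-- A set-final VA is deterministic: it has no ε-transitions and the transition relation
is a partial function on `Σ ∪ {⊢x, ⊣x : x ∈ V}`. -/
def DeterministicVAF {σ V Q : Type} (B : VAF σ V Q) : Prop :=
  (∀ p q : Q, (p, VLabel.eps, q) ∉ B.delta) ∧
  ∀ (p : Q) (l : VLabel σ V) (q q' : Q),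
    (p, l, q) ∈ B.delta → (p, l, q') ∈ B.delta → q = q'

section Determinization

namespace VADet

variable {σ V Q : Type}

/-- The label sequence of a list of transitions. -/
def labels (trs : List (Tr σ V Q)) : List (VLabel σ V) := trs.map (fun t => t.2.1)

/-- Predicate for non-ε labels. -/
def noEps [DecidableEq σ] [DecidableEq V] (l : VLabel σ V) : Bool :=
  decide (l ≠ VLabel.eps)

@[simp] lemma labels_nil : labels ([] : List (Tr σ V Q)) = [] := rfl
@[simp] lemma labels_cons (t : Tr σ V Q) (trs : List (Tr σ V Q)) :
    labels (t :: trs) = t.2.1 :: labels trs := rfl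
@[simp] lemma labels_append (t1 t2 : List (Tr σ V Q)) :
    labels (t1 ++ t2) = labels t1 ++ labels t2 := List.map_append

/-- An inductive characterization of chains with an end state. -/
inductive Chain : Q → List (Tr σ V Q) → Q → Prop
  | nil (q : Q) : Chain q [] q
  | cons {q q' r : Q} {l : VLabel σ V} {trs : List (Tr σ V Q)} :
      Chain q' trs r → Chain q ((q, l, q') :: trs) r

lemma chainFrom_nil (q : Q) : ChainFrom q ([] : List (Tr σ V Q)) := by
  constructor
  · simp
  · intro i h; simp at h

lemma endState_cons (q : Q) (t : Tr σ V Q) (trs : List (Tr σ V Q)) :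
    endState q (t :: trs) = endState t.2.2 trs := by
  cases trs with
  | nil => simp [endState]
  | cons t' trs' =>
    simp only [endState]
    cases h : (t' :: trs').getLast? with
    | none => simp at h
    | some u => rw [List.getLast?_cons_cons, h]

lemma chainFrom_cons_iff (q : Q) (t : Tr σ V Q) (trs : List (Tr σ V Q)) :
    ChainFrom q (t :: trs) ↔ t.1 = q ∧ ChainFrom t.2.2 trs := by
  constructor
  · rintro ⟨h1, h2⟩
    refine ⟨h1 t rfl, ?_, ?_⟩
    · intro t' ht'
      cases trs with
      | nil => simp at ht'
      | cons u us =>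
        simp only [List.head?_cons, Option.mem_some_iff] at ht'
        subst ht'
        have := h2 0 (by simp)
        simpa using this.symm
    · intro i hi
      have := h2 (i + 1) (by simpa using Nat.succ_lt_succ hi)
      simpa using this
  · rintro ⟨h1, h2, h3⟩
    refine ⟨?_, ?_⟩
    · intro t' ht'
      simp only [List.head?_cons, Option.mem_some_iff] at ht'
      subst ht'; exact h1
    · intro i hi
      cases i with
      | zero =>
        cases trs with
        | nil => simp at hi
        | cons u us =>
          have := h2 u (by simp)
          simpa using this.symm
      | succ j =>
        have hj : j + 1 < trs.length := by simpa using Nat.lt_of_succ_lt_succ hi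
        have := h3 j hj
        simpa using this

lemma chain_iff (q r : Q) (trs : List (Tr σ V Q)) :
    Chain q trs r ↔ ChainFrom q trs ∧ endState q trs = r := by
  constructor
  · intro h
    induction h with
    | nil q => exact ⟨chainFrom_nil q, rfl⟩
    | @cons q q' r l trs h ih =>
      refine ⟨(chainFrom_cons_iff q (q, l, q') trs).2 ⟨rfl, ih.1⟩, ?_⟩
      rw [endState_cons]; exact ih.2
  · rintro ⟨h1, h2⟩
    induction trs generalizing q with
    | nil => simp [endState] at h2; subst h2; exact Chain.nil q
    | cons t trs ih =>
      obtain ⟨ht, h1'⟩ := (chainFrom_cons_iff q t trs).1 h1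
      rw [endState_cons] at h2
      obtain ⟨tq, tl, tr⟩ := t
      cases ht
      exact Chain.cons (ih _ h1' h2)

lemma chain_append {q r s : Q} {t1 t2 : List (Tr σ V Q)}
    (h1 : Chain q t1 r) (h2 : Chain r t2 s) : Chain q (t1 ++ t2) s := by
  induction h1 with
  | nil => simpa using h2
  | cons h ih => exact Chain.cons (ih h2)

/-- One ε-step of the automaton. -/
def EpsStep (A : VA σ V Q) : Q → Q → Prop := fun p q => (p, VLabel.eps, q) ∈ A.delta

/-- ε-closure of a set of states. -/
def eclose (A : VA σ V Q) (S : Set Q) : Set Q :=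
  {q | ∃ p ∈ S, Relation.ReflTransGen (EpsStep A) p q}

/-- The subset-construction step on a non-ε label. -/
def lstep (A : VA σ V Q) (P : Set Q) (l : VLabel σ V) : Set Q :=
  eclose A {q' | ∃ p ∈ P, (p, l, q') ∈ A.delta}

/-- Iterated subset-construction step. -/
def reach (A : VA σ V Q) (P : Set Q) (L : List (VLabel σ V)) : Set Q :=
  L.foldl (lstep A) P

@[simp] lemma reach_nil (A : VA σ V Q) (P : Set Q) : reach A P [] = P := rfl
@[simp] lemma reach_cons (A : VA σ V Q) (P : Set Q) (l : VLabel σ V)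
    (L : List (VLabel σ V)) : reach A P (l :: L) = reach A (lstep A P l) L := rfl

/-- ε-closedness of a set of states. -/
def Closed (A : VA σ V Q) (P : Set Q) : Prop :=
  ∀ p ∈ P, ∀ q, EpsStep A p q → q ∈ P

lemma mem_eclose_self {A : VA σ V Q} {S : Set Q} {q : Q} (h : q ∈ S) :
    q ∈ eclose A S := ⟨q, h, Relation.ReflTransGen.refl⟩

lemma closed_eclose (A : VA σ V Q) (S : Set Q) : Closed A (eclose A S) := by
  rintro p ⟨p0, hp0, hp⟩ q hq
  exact ⟨p0, hp0, hp.tail hq⟩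

/-- Forward simulation: a chain of `A` is tracked by the subset construction. -/
lemma sim_fwd {A : VA σ V Q} [DecidableEq σ] [DecidableEq V]
    {q r : Q} {trs : List (Tr σ V Q)}
    (h : Chain q trs r) (hd : ∀ t ∈ trs, t ∈ A.delta) :
    ∀ P : Set Q, Closed A P → q ∈ P → r ∈ reach A P ((labels trs).filter noEps) := by
  induction h with
  | nil q => intro P _ hq; simpa using hq
  | @cons q q' r l trs h ih =>
    intro P hP hq
    have hdel : (q, l, q') ∈ A.delta := hd _ (by simp)
    have hd' : ∀ t ∈ trs, t ∈ A.delta := fun t ht => hd t (by simp [ht])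
    by_cases hl : l = VLabel.eps
    · subst hl
      have : q' ∈ P := hP q hq q' hdel
      simpa [noEps] using ih hd' P hP this
    · have hfil : (labels ((q, l, q') :: trs)).filter noEps
          = l :: (labels trs).filter noEps := by
        simp [noEps, hl]
      rw [hfil, reach_cons]
      exact ih hd' (lstep A P l) (closed_eclose A _)
        (mem_eclose_self ⟨q, hq, hdel⟩)

/-- From an ε-reachability fact, extract an ε-chain. -/
lemma eps_chain {A : VA σ V Q} {q r : Q}
    (h : Relation.ReflTransGen (EpsStep A) q r) :
    ∃ trs : List (Tr σ V Q), Chain q trs r ∧ (∀ t ∈ trs, t ∈ A.delta) ∧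
      ∀ l ∈ labels trs, l = VLabel.eps := by
  induction h using Relation.ReflTransGen.head_induction_on with
  | refl => exact ⟨[], Chain.nil r, by simp, by simp⟩
  | head h' _ ih =>
    obtain ⟨trs, hc, hdel, hl⟩ := ih
    refine ⟨(_, VLabel.eps, _) :: trs, Chain.cons hc, ?_, ?_⟩
    · intro t ht
      rcases List.mem_cons.1 ht with h | h
      · subst h; exact h'
      · exact hdel t h
    · intro l hl'
      rcases List.mem_cons.1 hl' with h | h
      · exact h
      · exact hl l h

/-- Backward simulation: from the subset construction back to a chain of `A`. -/
lemma sim_bwd {A : VA σ V Q} [DecidableEq σ] [DecidableEq V] :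
    ∀ L : List (VLabel σ V), (∀ l ∈ L, l ≠ VLabel.eps) →
    ∀ (S : Set Q) (r : Q), r ∈ reach A (eclose A S) L →
    ∃ q ∈ S, ∃ trs : List (Tr σ V Q), Chain q trs r ∧ (∀ t ∈ trs, t ∈ A.delta) ∧
      (labels trs).filter noEps = L := by
  intro L
  induction L with
  | nil =>
    intro _ S r hr
    obtain ⟨q, hq, hqr⟩ := hr
    obtain ⟨trs, hc, hdel, hl⟩ := eps_chain hqr
    refine ⟨q, hq, trs, hc, hdel, ?_⟩
    apply List.filter_eq_nil_iff.2
    intro l hl'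
    simp [noEps, hl l hl']
  | cons l L ih =>
    intro hne S r hr
    rw [reach_cons] at hr
    have : lstep A (eclose A S) l
        = eclose A {q' | ∃ p ∈ eclose A S, (p, l, q') ∈ A.delta} := rfl
    rw [this] at hr
    obtain ⟨q1, hq1, trs1, hc1, hdel1, hfil1⟩ :=
      ih (fun l' hl' => hne l' (by simp [hl'])) _ r hr
    obtain ⟨p, hp, hplq1⟩ := hq1
    obtain ⟨q, hq, hqp⟩ := hp
    obtain ⟨trs0, hc0, hdel0, hl0⟩ := eps_chain hqp
    refine ⟨q, hq, trs0 ++ (p, l, q1) :: trs1, ?_, ?_, ?_⟩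
    · exact chain_append hc0 (Chain.cons hc1)
    · intro t ht
      rcases List.mem_append.1 ht with h | h
      · exact hdel0 t h
      · rcases List.mem_cons.1 h with h | h
        · subst h; exact hplq1
        · exact hdel1 t h
    · have h0 : (labels trs0).filter noEps = [] := by
        apply List.filter_eq_nil_iff.2
        intro l' hl'
        simp [noEps, hl0 l' hl']
      have hl' : noEps l = true := by
        simp [noEps, hne l (by simp)]
      simp [List.filter_append, h0, hl', hfil1]

/-- The subset construction applied to `A`. -/
def detVA (A : VA σ V Q) : VAF σ V (Set Q) where
  init := eclose A {A.init}
  finals := {P | A.final ∈ P}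
  delta := {t | t.2.1 ≠ VLabel.eps ∧ t.2.2 = lstep A t.1 t.2.1}

/-- The canonical run of the subset construction on a label sequence. -/
def mkB (A : VA σ V Q) : Set Q → List (VLabel σ V) → List (Tr σ V (Set Q))
  | _, [] => []
  | P, l :: L => (P, l, lstep A P l) :: mkB A (lstep A P l) L

lemma chain_mkB (A : VA σ V Q) (L : List (VLabel σ V)) :
    ∀ P : Set Q, Chain P (mkB A P L) (reach A P L) := by
  induction L with
  | nil => intro P; exact Chain.nil P
  | cons l L ih => intro P; exact Chain.cons (ih (lstep A P l))

lemma labels_mkB (A : VA σ V Q) (L : List (VLabel σ V)) :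
    ∀ P : Set Q, labels (mkB A P L) = L := by
  induction L with
  | nil => intro P; rfl
  | cons l L ih => intro P; simp [mkB, ih]

lemma mem_mkB (A : VA σ V Q) (L : List (VLabel σ V)) (hL : ∀ l ∈ L, l ≠ VLabel.eps) :
    ∀ P : Set Q, ∀ t ∈ mkB A P L, t ∈ (detVA A).delta := by
  induction L with
  | nil => intro P t ht; simp [mkB] at ht
  | cons l L ih =>
    intro P t ht
    rcases List.mem_cons.1 ht with h | h
    · subst h; exact ⟨hne_of_mem_cons hL, rfl⟩
    · exact ih (fun l' hl' => hL l' (by simp [hl'])) _ t h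
  where hne_of_mem_cons {l : VLabel σ V} {L : List (VLabel σ V)}
      (h : ∀ l' ∈ l :: L, l' ≠ VLabel.eps) : l ≠ VLabel.eps := h l (by simp)

/-- Any chain of the subset construction ends at the `reach` of its labels, and
its labels are non-ε. -/
lemma brun_reach {A : VA σ V Q} {P R : Set Q} {btrs : List (Tr σ V (Set Q))}
    (h : Chain P btrs R) (hd : ∀ t ∈ btrs, t ∈ (detVA A).delta) :
    R = reach A P (labels btrs) ∧ ∀ l ∈ labels btrs, l ≠ VLabel.eps := by
  induction h with
  | nil q => exact ⟨rfl, by simp⟩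
  | @cons P P' R l btrs h ih =>
    have hdel : (P, l, P') ∈ (detVA A).delta := hd _ (by simp)
    obtain ⟨hne, hstep⟩ := hdel
    have hd' : ∀ t ∈ btrs, t ∈ (detVA A).delta := fun t ht => hd t (by simp [ht])
    obtain ⟨ih1, ih2⟩ := ih hd'
    refine ⟨?_, ?_⟩
    · simp only [labels_cons, reach_cons]
      rw [ih1]
      simp at hstep
      rw [hstep]
    · intro l' hl'
      rcases List.mem_cons.1 hl' with h | h
      · subst h; exact hne
      · exact ih2 l' h

/-! ### Label-level semantics -/

/-- The word spelled by a label sequence. -/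
def lword (L : List (VLabel σ V)) : List σ :=
  L.filterMap (fun l => match l with | VLabel.ltr a => some a | _ => none)

@[simp] lemma lword_nil : lword ([] : List (VLabel σ V)) = [] := rfl
@[simp] lemma lword_cons (l : VLabel σ V) (L : List (VLabel σ V)) :
    lword (l :: L) = (match l with | VLabel.ltr a => [a] | _ => []) ++ lword L := by
  cases l <;> simp [lword]

lemma word_eq_lword (trs : List (Tr σ V Q)) : word trs = lword (labels trs) := by
  simp only [word, lword, labels, List.filterMap_map]
  rfl

lemma lword_filter [DecidableEq σ] [DecidableEq V] (L : List (VLabel σ V)) :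
    lword (L.filter noEps) = lword L := by
  induction L with
  | nil => rfl
  | cons l L ih =>
    by_cases h : l = VLabel.eps
    · subst h; simpa [noEps] using ih
    · cases l <;> simp_all [noEps]

/-- The position of the first label satisfying `p`, measured in letters. -/
def posFind (p : VLabel σ V → Bool) (L : List (VLabel σ V)) : Option ℕ :=
  (L.findIdx? p).map (fun i => (lword (L.take i)).length)

@[simp] lemma posFind_nil (p : VLabel σ V → Bool) : posFind p [] = none := rfl

lemma posFind_cons (p : VLabel σ V → Bool) (l : VLabel σ V) (L : List (VLabel σ V)) :
    posFind p (l :: L) = if p l then some 0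
      else (posFind p L).map (fun n => (lword [l]).length + n) := by
  simp only [posFind, List.findIdx?_cons]
  by_cases h : p l
  · simp [h]
  · simp only [h, if_false, Option.map_map]
    cases hfi : L.findIdx? p with
    | none => simp
    | some i =>
      simp only [Option.map_some, Function.comp]
      simp only [List.take_succ_cons, lword_cons, List.length_append]
      cases l <;> simp [Nat.add_comm]

lemma posFind_filter [DecidableEq σ] [DecidableEq V] {p : VLabel σ V → Bool}
    (hp : p VLabel.eps = false) (L : List (VLabel σ V)) :
    posFind p (L.filter noEps) = posFind p L := by
  induction L with
  | nil => rfl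
  | cons l L ih =>
    by_cases h : l = VLabel.eps
    · subst h
      have : noEps (VLabel.eps : VLabel σ V) = false := by simp [noEps]
      rw [List.filter_cons_of_neg (by simp [this]), ih, posFind_cons, hp]
      simp
    · have : noEps l = true := by simp [noEps, h]
      rw [List.filter_cons_of_pos this, posFind_cons, posFind_cons, ih]

/-- The mapping determined by a label sequence. -/
def labelMapping [DecidableEq σ] [DecidableEq V] (L : List (VLabel σ V)) : Mapping V :=
  fun x =>
    match posFind (fun l => decide (l = VLabel.vopen x)) L,
          posFind (fun l => decide (l = VLabel.vclose x)) L with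
    | some i, some j => some (1 + i, 1 + j)
    | _, _ => none

lemma runMapping_eq [DecidableEq σ] [DecidableEq V] (trs : List (Tr σ V Q)) :
    runMapping trs = labelMapping (labels trs) := by
  funext x
  simp only [runMapping, labelMapping, posFind, labels, List.findIdx?_map]
  have hopen : ((fun l => decide (l = VLabel.vopen x)) ∘ (fun t : Tr σ V Q => t.2.1))
      = fun t : Tr σ V Q => decide (t.2.1 = VLabel.vopen x) := rfl
  have hclose : ((fun l => decide (l = VLabel.vclose x)) ∘ (fun t : Tr σ V Q => t.2.1))
      = fun t : Tr σ V Q => decide (t.2.1 = VLabel.vclose x) := rfl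
  rw [hopen, hclose]
  cases ho : trs.findIdx? (fun t => decide (t.2.1 = VLabel.vopen x)) with
  | none => simp
  | some i =>
    cases hc : trs.findIdx? (fun t => decide (t.2.1 = VLabel.vclose x)) with
    | none => simp
    | some j =>
      simp only [Option.map_some]
      have ht : ∀ k : ℕ, lword ((trs.map (fun t : Tr σ V Q => t.2.1)).take k)
          = word (trs.take k) := by
        intro k
        rw [word_eq_lword, labels, List.map_take]
      rw [ht i, ht j]
      simp [posAt]

lemma labelMapping_filter [DecidableEq σ] [DecidableEq V] (L : List (VLabel σ V)) :
    labelMapping (L.filter noEps) = labelMapping L := by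
  funext x
  simp only [labelMapping]
  rw [posFind_filter (by simp) L, posFind_filter (by simp) L]

/-! ### Counting and validity at label level -/

lemma openCount_eq [DecidableEq σ] [DecidableEq V] (x : V) (trs : List (Tr σ V Q)) :
    openCount x trs = (labels trs).countP (fun l => decide (l = VLabel.vopen x)) := by
  simp only [openCount, labels, List.countP_map]
  rfl

lemma closeCount_eq [DecidableEq σ] [DecidableEq V] (x : V) (trs : List (Tr σ V Q)) :
    closeCount x trs = (labels trs).countP (fun l => decide (l = VLabel.vclose x)) := by
  simp only [closeCount, labels, List.countP_map]
  rfl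

lemma countP_filter_noEps [DecidableEq σ] [DecidableEq V] {p : VLabel σ V → Bool}
    (hp : p VLabel.eps = false) (L : List (VLabel σ V)) :
    (L.filter noEps).countP p = L.countP p := by
  rw [List.countP_filter]
  apply List.countP_congr
  intro l _
  constructor
  · intro h; exact (Bool.and_eq_true _ _ ▸ h).1
  · intro h
    have : noEps l = true := by
      by_cases he : l = VLabel.eps
      · subst he; rw [hp] at h; exact absurd h (by simp)
      · simp [noEps, he]
    simp [h, this]

/-- Validity of variable usage, at the level of label sequences. -/
def LValid [DecidableEq σ] [DecidableEq V] (L : List (VLabel σ V)) : Prop :=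
  ∀ x : V, L.countP (fun l => decide (l = VLabel.vopen x)) ≤ 1 ∧
    L.countP (fun l => decide (l = VLabel.vclose x)) ≤ 1 ∧
    ∀ p : List (VLabel σ V), p <+: L →
      p.countP (fun l => decide (l = VLabel.vclose x)) ≤
        p.countP (fun l => decide (l = VLabel.vopen x))

lemma validVars_iff [DecidableEq σ] [DecidableEq V] (trs : List (Tr σ V Q)) :
    ValidVars trs ↔ LValid (labels trs) := by
  constructor
  · intro h x
    obtain ⟨h1, h2, h3⟩ := h x
    refine ⟨by rw [← openCount_eq]; exact h1, by rw [← closeCount_eq]; exact h2, ?_⟩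
    intro p hp
    have hp' : p = (labels trs).take p.length := List.prefix_iff_eq_take.1 hp
    have : p = labels (trs.take p.length) := by
      rw [labels, List.map_take]; exact hp'
    rw [this, ← openCount_eq, ← closeCount_eq]
    exact h3 _ (List.take_prefix _ _)
  · intro h x
    obtain ⟨h1, h2, h3⟩ := h x
    refine ⟨by rw [openCount_eq]; exact h1, by rw [closeCount_eq]; exact h2, ?_⟩
    intro p hp
    rw [openCount_eq, closeCount_eq]
    exact h3 _ (List.IsPrefix.map _ hp)

lemma prefix_filter_exists [DecidableEq σ] [DecidableEq V] :
    ∀ (L p : List (VLabel σ V)), p <+: L.filter noEps →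
      ∃ p' : List (VLabel σ V), p' <+: L ∧ p'.filter noEps = p := by
  intro L
  induction L with
  | nil =>
    intro p hp
    simp only [List.filter_nil, List.prefix_nil] at hp
    exact ⟨[], by simp, by simp [hp]⟩
  | cons l L ih =>
    intro p hp
    by_cases hl : noEps l
    · rw [List.filter_cons_of_pos hl] at hp
      cases p with
      | nil => exact ⟨[], by simp, rfl⟩
      | cons a p' =>
        obtain ⟨hla, hp'⟩ := List.cons_prefix_cons.1 hp
        obtain ⟨q, hq1, hq2⟩ := ih p' hp'
        subst hla
        exact ⟨a :: q, List.cons_prefix_cons.2 ⟨rfl, hq1⟩,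
          by rw [List.filter_cons_of_pos hl, hq2]⟩
    · rw [List.filter_cons_of_neg hl] at hp
      obtain ⟨q, hq1, hq2⟩ := ih p hp
      exact ⟨l :: q, List.cons_prefix_cons.2 ⟨rfl, hq1⟩,
        by rw [List.filter_cons_of_neg hl, hq2]⟩

lemma lvalid_filter_iff [DecidableEq σ] [DecidableEq V] (L : List (VLabel σ V)) :
    LValid (L.filter noEps) ↔ LValid L := by
  constructor
  · intro h x
    obtain ⟨h1, h2, h3⟩ := h x
    rw [countP_filter_noEps (by simp) L] at h1
    rw [countP_filter_noEps (by simp) L] at h2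
    refine ⟨h1, h2, ?_⟩
    intro p hp
    have := h3 (p.filter noEps) (List.IsPrefix.filter _ hp)
    rwa [countP_filter_noEps (by simp) p, countP_filter_noEps (by simp) p] at this
  · intro h x
    obtain ⟨h1, h2, h3⟩ := h x
    rw [← countP_filter_noEps (p := fun l => decide (l = VLabel.vopen x)) (by simp) L]
      at h1
    rw [← countP_filter_noEps (p := fun l => decide (l = VLabel.vclose x)) (by simp) L]
      at h2
    refine ⟨h1, h2, ?_⟩
    intro p hp
    obtain ⟨p', hp1, hp2⟩ := prefix_filter_exists L p hp
    subst hp2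
    rw [countP_filter_noEps (by simp) p', countP_filter_noEps (by simp) p']
    exact h3 p' hp1

end VADet

end Determinization

/-- For every VA `A` there exists a deterministic VA `A^det` — obtained by the subset
construction, so with state space `2^Q` — such that `⟦A⟧_d = ⟦A^det⟧_d` for every
document `d`. -/
theorem va_determinization {σ V Q : Type} [DecidableEq σ] [DecidableEq V]
    (A : VA σ V Q) :
    ∃ B : VAF σ V (Set Q), DeterministicVAF B ∧
      ∀ d : List σ, semVA A d = semVAF B d := by
  classical
  open VADet in
  refine ⟨detVA A, ⟨?_, ?_⟩, ?_⟩
  · intro p q h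
    exact h.1 rfl
  · rintro p l q q' ⟨_, hq⟩ ⟨_, hq'⟩
    exact hq.trans hq'.symm
  · intro d
    ext μ
    constructor
    · rintro ⟨trs, ⟨hdel, hchain, hend, hword, hvalid⟩, hμ⟩
      have hch : Chain A.init trs A.final := (chain_iff _ _ _).2 ⟨hchain, hend⟩
      set L := (labels trs).filter noEps with hL
      have hinit : A.init ∈ (eclose A {A.init} : Set Q) := mem_eclose_self rfl
      have hreach : A.final ∈ reach A (eclose A {A.init}) L :=
        sim_fwd hch hdel _ (closed_eclose A _) hinit
      have hLne : ∀ l ∈ L, l ≠ VLabel.eps := by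
        intro l hl
        have := List.of_mem_filter hl
        simpa [noEps] using this
      refine ⟨mkB A (detVA A).init L, ⟨?_, ?_, ?_, ?_, ?_⟩, ?_⟩
      · exact mem_mkB A L hLne _
      · exact ((chain_iff _ _ _).1 (chain_mkB A L _)).1
      · show endState _ _ ∈ _
        rw [((chain_iff _ _ _).1 (chain_mkB A L ((detVA A).init))).2]
        exact hreach
      · rw [word_eq_lword, labels_mkB, hL, lword_filter, ← word_eq_lword, hword]
      · rw [validVars_iff, labels_mkB]
        exact (lvalid_filter_iff _).2 ((validVars_iff trs).1 hvalid)
      · rw [hμ, runMapping_eq, runMapping_eq, labels_mkB, hL, labelMapping_filter]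
    · rintro ⟨btrs, ⟨hdel, hchain, hend, hword, hvalid⟩, hμ⟩
      have hch : Chain (detVA A).init btrs (endState (detVA A).init btrs) :=
        (chain_iff _ _ _).2 ⟨hchain, rfl⟩
      obtain ⟨hR, hne⟩ := brun_reach hch hdel
      have hfin : A.final ∈ reach A (eclose A {A.init}) (labels btrs) := by
        have h' := hend
        rw [hR] at h'
        exact h'
      obtain ⟨q, hq, trs, hc, hdelA, hfil⟩ :=
        sim_bwd (labels btrs) hne {A.init} A.final hfin
      rcases hq with rfl
      refine ⟨trs, ⟨hdelA, ((chain_iff _ _ _).1 hc).1, ((chain_iff _ _ _).1 hc).2,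
        ?_, ?_⟩, ?_⟩
      · rw [word_eq_lword, ← lword_filter, hfil, ← word_eq_lword, hword]
      · rw [validVars_iff, ← lvalid_filter_iff, hfil, ← validVars_iff]
        exact hvalid
      · rw [hμ, runMapping_eq, runMapping_eq, ← labelMapping_filter (labels trs), hfil]
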